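/- Let G be a graph, S a minimal separator of G, and C a component of G − S. Then every edge of the realization R(S,C) that is not an edge of G[S ∪ C] joins two vertices of S; moreover, if I is any triangulation of G in which S is a clique, then every clique of I contained in S ∪ C is a clique of the graph I[S ∪ C], which is a triangulation of R(S,C). -/

import Mathlib

open scoped Classical

/-- Data of a (finite) tree decomposition: an index type, a graph on it, and bags. -/
structure TDData (V : Type) where
  ι : Type
  fin : Fintype ι
  tree : SimpleGraph ι
  bag : ι → Finset V

/-- `D` is a tree decomposition of the graph `G`. -/
def IsGraphTD {V : Type} (G : SimpleGraph V) (D : TDData V) : Prop :=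
  D.tree.IsTree ∧
  (∀ v : V, ∃ t, v ∈ D.bag t) ∧
  (∀ u v : V, G.Adj u v → ∃ t, u ∈ D.bag t ∧ v ∈ D.bag t) ∧
  (∀ v : V, (D.tree.induce {t | v ∈ D.bag t}).Connected)

/-- `D` is a tree decomposition of the hypergraph with edge family `E`. -/
def IsHyperTD {V : Type} (E : Finset (Finset V)) (D : TDData V) : Prop :=
  D.tree.IsTree ∧
  (∀ v : V, ∃ t, v ∈ D.bag t) ∧
  (∀ e ∈ E, ∃ t, e ⊆ D.bag t) ∧
  (∀ v : V, (D.tree.induce {t | v ∈ D.bag t}).Connected)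

/-- A monotone width function. -/
def MonoWidth {V : Type} (f : Finset V → NNReal) : Prop :=
  ∀ X Y : Finset V, X ⊆ Y → f X ≤ f Y

/-- The `f`-width of a tree decomposition: the supremum of `f` over its bags. -/
noncomputable def tdWidth {V : Type} (f : Finset V → NNReal) (D : TDData V) : NNReal :=
  ⨆ t : D.ι, f (D.bag t)

/-- The `f`-tree-width of a graph. -/
noncomputable def ftw {V : Type} (G : SimpleGraph V) (f : Finset V → NNReal) : NNReal :=
  ⨅ D : {D : TDData V // IsGraphTD G D}, tdWidth f D.1

/-- The `f`-hypertree-width of a hypergraph. -/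
noncomputable def fhtw {V : Type} (E : Finset (Finset V)) (f : Finset V → NNReal) : NNReal :=
  ⨅ D : {D : TDData V // IsHyperTD E D}, tdWidth f D.1

/-- The `f`-clique-number of a graph. -/
noncomputable def fCliqueNum {V : Type} (G : SimpleGraph V) (f : Finset V → NNReal) : NNReal :=
  ⨆ Ω : {Ω : Finset V // G.IsClique (Ω : Set V)}, f Ω.1

/-- The Gaifman (primal) graph of a hypergraph. -/
def gaifman {V : Type} (E : Finset (Finset V)) : SimpleGraph V :=
  SimpleGraph.fromRel fun u v => ∃ e ∈ E, u ∈ e ∧ v ∈ e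

/-- A graph is chordal if every cycle of length at least 4 has a chord. -/
def IsChordal {V : Type} (G : SimpleGraph V) : Prop :=
  ∀ (v : V) (p : G.Walk v v), p.IsCycle → 4 ≤ p.length →
    ∃ u w : V, u ∈ p.support ∧ w ∈ p.support ∧ G.Adj u w ∧ s(u, w) ∉ p.edges

/-- `I` is a triangulation of `G`: a chordal supergraph on the same vertex set. -/
def IsTriangulation {V : Type} (G I : SimpleGraph V) : Prop :=
  G ≤ I ∧ IsChordal I

/-- `I` is a minimal triangulation of `G`. -/
def IsMinTriang {V : Type} (G I : SimpleGraph V) : Prop :=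
  IsTriangulation G I ∧ ∀ I' : SimpleGraph V, IsTriangulation G I' → I' ≤ I → I' = I

/-- A maximal clique of `G` (as a finset). -/
def IsMaxClique {V : Type} (G : SimpleGraph V) (Ω : Finset V) : Prop :=
  G.IsClique (Ω : Set V) ∧ ∀ Ω' : Finset V, G.IsClique (Ω' : Set V) → Ω ⊆ Ω' → Ω = Ω'

/-- A potential maximal clique: a maximal clique of some minimal triangulation. -/
def IsPMC {V : Type} (G : SimpleGraph V) (Ω : Finset V) : Prop :=
  ∃ I : SimpleGraph V, IsMinTriang G I ∧ IsMaxClique I Ω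

/-- `u` and `v` are joined by a walk avoiding `S`. -/
def ReachAvoid {V : Type} (G : SimpleGraph V) (S : Finset V) (u v : V) : Prop :=
  ∃ p : G.Walk u v, ∀ x ∈ p.support, x ∉ S

/-- `S` is a `u,v`-separator of `G`. -/
def IsUVSep {V : Type} (G : SimpleGraph V) (u v : V) (S : Finset V) : Prop :=
  u ∉ S ∧ v ∉ S ∧ ¬ ReachAvoid G S u v

/-- `S` is a minimal separator of `G`: a minimal `u,v`-separator for some
non-adjacent pair of distinct vertices `u,v`. -/
def IsMinSep {V : Type} (G : SimpleGraph V) (S : Finset V) : Prop :=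
  ∃ u v : V, u ≠ v ∧ ¬ G.Adj u v ∧ IsUVSep G u v S ∧ ∀ S' ⊂ S, ¬ IsUVSep G u v S'

/-- An inclusion-minimal separator: a minimal separator not properly containing
another minimal separator. -/
def IsInclMinSep {V : Type} (G : SimpleGraph V) (S : Finset V) : Prop :=
  IsMinSep G S ∧ ∀ S' : Finset V, IsMinSep G S' → S' ⊆ S → S' = S

/-- `C` is (the vertex set of) a connected component of `G - S`. -/
def IsCompAvoid {V : Type} (G : SimpleGraph V) (S C : Finset V) : Prop :=
  C.Nonempty ∧ (∀ x ∈ C, x ∉ S) ∧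
  (∀ x ∈ C, ∀ y ∈ C, ReachAvoid G S x y) ∧
  (∀ x ∈ C, ∀ y : V, y ∉ S → ReachAvoid G S x y → y ∈ C)

/-- The neighborhood of a set `C` of vertices, as a set. -/
def nbhdSet {V : Type} (G : SimpleGraph V) (C : Finset V) : Set V :=
  {v | v ∉ C ∧ ∃ u ∈ C, G.Adj u v}

/-- The neighborhood of a set `C` of vertices, as a finset. -/
noncomputable def nbhd {V : Type} [Fintype V] [DecidableEq V]
    (G : SimpleGraph V) (C : Finset V) : Finset V :=
  Finset.univ.filter fun v => v ∉ C ∧ ∃ u ∈ C, G.Adj u v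

/-- The realization `R(S,C)` of a block: the graph on `S ∪ C` induced from `G`
with `S` turned into a clique (viewed as a graph on `V` with no edges outside `S ∪ C`). -/
def real {V : Type} [DecidableEq V] (G : SimpleGraph V) (S C : Finset V) : SimpleGraph V :=
  SimpleGraph.fromRel fun u v =>
    (u ∈ S ∪ C ∧ v ∈ S ∪ C) ∧ (G.Adj u v ∨ (u ∈ S ∧ v ∈ S))

/-- The subgraph of `I` induced by a finset `W`, viewed as a graph on `V`. -/
def restrict {V : Type} (I : SimpleGraph V) (W : Finset V) : SimpleGraph V :=
  SimpleGraph.fromRel fun u v => u ∈ W ∧ v ∈ W ∧ I.Adj u v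

/-- `(S,C)` is a full block of `G`. -/
def FullBlock {V : Type} (G : SimpleGraph V) (S C : Finset V) : Prop :=
  IsMinSep G S ∧ IsCompAvoid G S C ∧ nbhdSet G C = (S : Set V)



lemma walk_support_adj {V : Type} {H : SimpleGraph V} :
    ∀ {a b : V} (p : H.Walk a b), ¬ p.Nil → ∀ x ∈ p.support, ∃ y, H.Adj x y := by
  intro a b p
  induction p with
  | nil => intro h; exact absurd SimpleGraph.Walk.nil_nil h
  | cons h q ih =>
    intro _ x hx
    rw [SimpleGraph.Walk.support_cons, List.mem_cons] at hx
    rcases hx with rfl | hx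
    · exact ⟨_, h⟩
    · by_cases hq : q.Nil
      · rw [SimpleGraph.Walk.nil_iff_support_eq] at hq
        rw [hq, List.mem_singleton] at hx
        subst hx
        exact ⟨_, h.symm⟩
      · exact ih hq x hx

lemma restrict_mem {V : Type} {I : SimpleGraph V} {W : Finset V} {u v : V}
    (h : (restrict I W).Adj u v) : u ∈ W ∧ v ∈ W ∧ I.Adj u v := by
  rcases h with ⟨hne, ⟨h1, h2, h3⟩ | ⟨h1, h2, h3⟩⟩
  · exact ⟨h1, h2, h3⟩
  · exact ⟨h2, h1, h3.symm⟩

/-- every edge of `R(S,C)` that is not an edge of `G` joins two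
vertices of `S`; moreover, if `I` is a triangulation of `G` in which `S` is a
clique, then every clique of `I` contained in `S ∪ C` is a clique of
`I[S ∪ C]`, and `I[S ∪ C]` is a triangulation of `R(S,C)`. -/
theorem stmt18 {V : Type} [DecidableEq V] (G : SimpleGraph V)
    (S : Finset V) (hS : IsMinSep G S) (C : Finset V) (hC : IsCompAvoid G S C) :
    (∀ u v : V, (real G S C).Adj u v → ¬ G.Adj u v → u ∈ S ∧ v ∈ S) ∧
    (∀ I : SimpleGraph V, IsTriangulation G I → I.IsClique (S : Set V) →
      (∀ Ω : Finset V, (Ω : Set V) ⊆ (S : Set V) ∪ (C : Set V) →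
        I.IsClique (Ω : Set V) → (restrict I (S ∪ C)).IsClique (Ω : Set V)) ∧
      IsTriangulation (real G S C) (restrict I (S ∪ C))) := by
  have hSC : ((S ∪ C : Finset V) : Set V) = (S : Set V) ∪ (C : Set V) := by
    simp [Finset.coe_union]
  constructor
  · rintro u v ⟨hne, ⟨⟨hu, hv⟩, hG | hSS⟩ | ⟨⟨hv, hu⟩, hG | hSS⟩⟩ hnG
    · exact absurd hG hnG
    · exact hSS
    · exact absurd hG.symm hnG
    · exact ⟨hSS.2, hSS.1⟩
  · intro I ⟨hGI, hIchord⟩ hScl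
    have hle : restrict I (S ∪ C) ≤ I := by
      intro u v h
      exact (restrict_mem h).2.2
    constructor
    · intro Ω hΩsub hΩcl
      intro x hx y hy hxy
      have hxW : x ∈ S ∪ C := by
        have := hΩsub hx; rw [Finset.mem_union]; simpa using this
      have hyW : y ∈ S ∪ C := by
        have := hΩsub hy; rw [Finset.mem_union]; simpa using this
      exact ⟨hxy, Or.inl ⟨hxW, hyW, hΩcl hx hy hxy⟩⟩
    · constructor
      · rintro u v ⟨hne, ⟨⟨hu, hv⟩, hG | hSS⟩ | ⟨⟨hv, hu⟩, hG | hSS⟩⟩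
        · exact ⟨hne, Or.inl ⟨hu, hv, hGI hG⟩⟩
        · exact ⟨hne, Or.inl ⟨hu, hv, hScl (by simp [hSS.1]) (by simp [hSS.2]) hne⟩⟩
        · exact ⟨hne, Or.inl ⟨hu, hv, (hGI hG).symm⟩⟩
        · exact ⟨hne, Or.inl ⟨hu, hv, hScl (by simp [hSS.2]) (by simp [hSS.1]) hne⟩⟩
      · intro v p hp hlen
        have hcyc' : (p.mapLe hle).IsCycle := hp.mapLe hle
        have hnotnil : ¬ p.Nil := by
          intro h
          rw [SimpleGraph.Walk.nil_iff_length_eq] at h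
          omega
        have hfun : ⇑(SimpleGraph.Hom.ofLE hle) = id := rfl
        have hsupp : (p.mapLe hle).support = p.support := by
          simp [SimpleGraph.Walk.mapLe, SimpleGraph.Walk.support_map, hfun]
        have hed : (p.mapLe hle).edges = p.edges := by
          simp [SimpleGraph.Walk.mapLe, SimpleGraph.Walk.edges_map, hfun, Sym2.map_id']
        have hlen' : 4 ≤ (p.mapLe hle).length := by
          simpa [SimpleGraph.Walk.mapLe] using hlen
        obtain ⟨u, w, hu, hw, hadj, hne⟩ := hIchord v (p.mapLe hle) hcyc' hlen'
        rw [hsupp] at hu hw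
        rw [hed] at hne
        have huW : u ∈ S ∪ C := by
          obtain ⟨y, hy⟩ := walk_support_adj p hnotnil u hu
          exact (restrict_mem hy).1
        have hwW : w ∈ S ∪ C := by
          obtain ⟨y, hy⟩ := walk_support_adj p hnotnil w hw
          exact (restrict_mem hy).1
        exact ⟨u, w, hu, hw, ⟨hadj.ne, Or.inl ⟨huW, hwW, hadj⟩⟩, hne⟩
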